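/- Vitali–Porter theorem: Let D ⊆ ℂ be open and connected, and let (f_L) be a sequence of holomorphic functions on D with |f_L(z)| ≤ M for all L and all z ∈ D. Suppose there is a subset D' ⊆ D with an accumulation point in D such that lim_{L→∞} f_L(z) exists for each z ∈ D'. Then (f_L) converges uniformly on every compact subset of D to a holomorphic function f_∞. -/

import Mathlib

open Filter Topology
open Metric

set_option maxHeartbeats 1000000 in
private lemma vp_key (f : ℕ → ℂ → ℂ) (M : ℝ) (R : NNReal) (c : ℂ) (hR : (0:ℝ) < R)
    (hholo : ∀ L, DifferentiableOn ℂ (f L) (closedBall c R))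
    (hbound : ∀ L, ∀ z ∈ closedBall c R, ‖f L z‖ ≤ M)
    (hc : ∀ δ : ℝ, 0 < δ → ∃ w, dist w c < δ ∧ w ≠ c ∧ CauchySeq fun L => f L w) :
    UniformCauchySeqOn f atTop (closedBall c (R / 2)) := by
  have hM : 0 ≤ M := le_trans (norm_nonneg _) (hbound 0 c (mem_closedBall_self hR.le))
  have hRn : 0 < R := by exact_mod_cast hR
  set p : ℕ → FormalMultilinearSeries ℂ ℂ ℂ := fun L => cauchyPowerSeries (f L) c R with hp
  set a : ℕ → ℕ → ℂ := fun L n => (p L).coeff n with ha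
  have hps : ∀ L, HasFPowerSeriesOnBall (f L) (p L) c R := fun L =>
    (hholo L).hasFPowerSeriesOnBall hRn
  -- coefficient bound
  have hcoef : ∀ L n, ‖a L n‖ ≤ M / (R:ℝ) ^ n := by
    intro L n
    have h1 : ‖a L n‖ ≤ ‖p L n‖ := by
      exact (FormalMultilinearSeries.norm_apply_eq_norm_coef (p := p L) (n := n)).ge
    have h2 : ‖p L n‖ ≤ ((2 * Real.pi)⁻¹ * ∫ θ : ℝ in (0)..2 * Real.pi,
        ‖f L (circleMap c R θ)‖) * |(R:ℝ)|⁻¹ ^ n := norm_cauchyPowerSeries_le _ _ _ _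
    have hcont : Continuous fun θ : ℝ => ‖f L (circleMap c R θ)‖ := by
      refine (((hholo L).continuousOn.comp_continuous (continuous_circleMap c R) ?_).norm)
      intro θ
      exact sphere_subset_closedBall (circleMap_mem_sphere c hR.le θ)
    have h3 : (∫ θ : ℝ in (0)..2 * Real.pi, ‖f L (circleMap c R θ)‖) ≤ 2 * Real.pi * M := by
      have := intervalIntegral.integral_mono_on (a := 0) (b := 2 * Real.pi)
        Real.two_pi_pos.le (hcont.intervalIntegrable (μ := MeasureTheory.volume) 0 (2 * Real.pi)) intervalIntegrable_const
        (fun θ _ => hbound L _ (sphere_subset_closedBall (circleMap_mem_sphere c hR.le θ)))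
      simpa [mul_comm] using this
    have h4 : ((2 * Real.pi)⁻¹ * ∫ θ : ℝ in (0)..2 * Real.pi,
        ‖f L (circleMap c R θ)‖) * |(R:ℝ)|⁻¹ ^ n ≤ M / (R:ℝ) ^ n := by
      rw [abs_of_nonneg hR.le, div_eq_mul_inv, ← inv_pow]
      have hpos : (0:ℝ) ≤ ((R:ℝ)⁻¹) ^ n := by positivity
      refine mul_le_mul_of_nonneg_right ?_ hpos
      rw [inv_mul_le_iff₀ (by positivity)]
      calc (∫ θ : ℝ in (0)..2 * Real.pi, ‖f L (circleMap c R θ)‖) ≤ 2 * Real.pi * M := h3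
        _ = 2 * Real.pi * M := rfl
    exact h1.trans (h2.trans h4)
  -- power series sums on the half ball
  have hsum : ∀ L, ∀ z ∈ closedBall c ((R:ℝ) / 2),
      HasSum (fun n => a L n * (z - c) ^ n) (f L z) := by
    intro L z hz
    have hz' : z ∈ Metric.eball c (R : ENNReal) := by
      rw [Metric.mem_eball, edist_dist, ← ENNReal.ofReal_coe_nnreal]
      exact ENNReal.ofReal_lt_ofReal_iff_of_nonneg dist_nonneg |>.2
        (lt_of_le_of_lt (mem_closedBall.1 hz) (by linarith))
    have := (hps L).hasSum_sub hz'
    simpa [FormalMultilinearSeries.apply_eq_pow_smul_coeff, smul_eq_mul, mul_comm] using this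
  have hdsum : ∀ L K, ∀ z ∈ closedBall c ((R:ℝ) / 2),
      HasSum (fun n => (a L n - a K n) * (z - c) ^ n) (f L z - f K z) := by
    intro L K z hz
    simpa [sub_mul] using (hsum L z hz).sub (hsum K z hz)
  -- tail estimate
  have htail : ∀ L K n, ∀ z ∈ closedBall c ((R:ℝ) / 2),
      ‖f L z - f K z - ∑ m ∈ Finset.range n, (a L m - a K m) * (z - c) ^ m‖
        ≤ 4 * M * (‖z - c‖ / R) ^ n := by
    intro L K n z hz
    set q : ℝ := ‖z - c‖ / R with hqdef
    have hq0 : 0 ≤ q := by positivity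
    have hzc : ‖z - c‖ ≤ (R:ℝ) / 2 := by rwa [← dist_eq_norm, ← mem_closedBall]
    have hq2 : q ≤ 1 / 2 := by
      rw [hqdef, div_le_div_iff₀ hR (by norm_num)]
      linarith
    have hs := hdsum L K z hz
    have heq : f L z - f K z - ∑ m ∈ Finset.range n, (a L m - a K m) * (z - c) ^ m
        = ∑' j : ℕ, (a L (j + n) - a K (j + n)) * (z - c) ^ (j + n) := by
      rw [← hs.tsum_eq, ← hs.summable.sum_add_tsum_nat_add n]
      ring
    rw [heq]
    have hzeq : ‖z - c‖ = q * R := by rw [hqdef, div_mul_cancel₀ _ hR.ne']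
    have hbd : ∀ j : ℕ, ‖(a L (j + n) - a K (j + n)) * (z - c) ^ (j + n)‖
        ≤ (2 * M * q ^ n) * q ^ j := by
      intro j
      rw [norm_mul, norm_pow, hzeq]
      have h1 : ‖a L (j + n) - a K (j + n)‖ ≤ 2 * M / (R:ℝ) ^ (j + n) := by
        calc ‖a L (j + n) - a K (j + n)‖ ≤ ‖a L (j + n)‖ + ‖a K (j + n)‖ := norm_sub_le _ _
          _ ≤ M / (R:ℝ) ^ (j + n) + M / (R:ℝ) ^ (j + n) := add_le_add (hcoef _ _) (hcoef _ _)
          _ = 2 * M / (R:ℝ) ^ (j + n) := by ring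
      calc ‖a L (j + n) - a K (j + n)‖ * (q * R) ^ (j + n)
          ≤ (2 * M / (R:ℝ) ^ (j + n)) * (q * R) ^ (j + n) := by
            exact mul_le_mul_of_nonneg_right h1 (by positivity)
        _ = 2 * M * q ^ (j + n) := by
            rw [mul_pow]
            field_simp
        _ = (2 * M * q ^ n) * q ^ j := by rw [pow_add]; ring
    have hg : HasSum (fun j : ℕ => (2 * M * q ^ n) * q ^ j) ((2 * M * q ^ n) * (1 - q)⁻¹) :=
      (hasSum_geometric_of_lt_one hq0 (lt_of_le_of_lt hq2 (by norm_num))).mul_left _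
    refine (tsum_of_norm_bounded hg hbd).trans ?_
    have hinv : (1 - q)⁻¹ ≤ 2 := by
      rw [inv_le_comm₀ (by linarith) (by norm_num)]
      linarith
    have hnn : 0 ≤ 2 * M * q ^ n := by positivity
    nlinarith [mul_le_mul_of_nonneg_left hinv hnn]
  -- coefficients form Cauchy sequences
  have hcau : ∀ n, ∀ ε : ℝ, 0 < ε → ∃ N, ∀ L ≥ N, ∀ K ≥ N, ‖a L n - a K n‖ ≤ ε := by
    intro n
    induction n using Nat.strong_induction_on with
    | _ n IH =>
    intro ε hε
    have hδpos : 0 < min ((R:ℝ) / 2) (ε * (R:ℝ) ^ (n + 1) / (8 * (M + 1))) := by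
      apply lt_min (by linarith)
      positivity
    obtain ⟨w, hwδ, hwne, hwcau⟩ := hc _ hδpos
    set t : ℝ := ‖w - c‖ with htdef
    have ht0 : 0 < t := norm_pos_iff.2 (sub_ne_zero.2 hwne)
    have hwd : dist w c = t := dist_eq_norm _ _
    have htR2 : t ≤ (R:ℝ) / 2 := by
      have := hwδ.le.trans (min_le_left _ _); rwa [hwd] at this
    have htε : t ≤ ε * (R:ℝ) ^ (n + 1) / (8 * (M + 1)) := by
      have := hwδ.le.trans (min_le_right _ _); rwa [hwd] at this
    have hwball : w ∈ closedBall c ((R:ℝ) / 2) := by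
      rw [mem_closedBall, hwd]; exact htR2
    -- choose indices
    obtain ⟨N₀, hN₀⟩ := Metric.cauchySeq_iff.1 hwcau (ε * t ^ n / 4) (by positivity)
    have hNm : ∀ m : Fin n, ∃ N, ∀ L ≥ N, ∀ K ≥ N,
        ‖a L m - a K m‖ ≤ ε * t ^ n / (4 * n) / t ^ (m:ℕ) := by
      rintro ⟨m, hm⟩
      have hn0 : 0 < n := lt_of_le_of_lt (Nat.zero_le m) hm
      exact IH m hm _ (by positivity)
    choose N' hN' using hNm
    set N : ℕ := max N₀ ((Finset.univ : Finset (Fin n)).sup N') with hNdef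
    refine ⟨N, fun L hL K hK => ?_⟩
    have hL₀ : L ≥ N₀ := le_trans (le_max_left _ _) hL
    have hK₀ : K ≥ N₀ := le_trans (le_max_left _ _) hK
    -- main estimate at w
    have hF : ‖f L w - f K w‖ ≤ ε * t ^ n / 4 := by
      have := hN₀ L hL₀ K hK₀
      rw [dist_eq_norm] at this
      exact this.le
    have hterm : ∀ m : Fin n, ‖(a L m - a K m) * (w - c) ^ (m:ℕ)‖ ≤ ε * t ^ n / (4 * n) := by
      intro m
      have hLm : L ≥ N' m := le_trans ((Finset.le_sup (Finset.mem_univ m)).trans (le_max_right _ _)) hL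
      have hKm : K ≥ N' m := le_trans ((Finset.le_sup (Finset.mem_univ m)).trans (le_max_right _ _)) hK
      rw [norm_mul, norm_pow, ← htdef]
      calc ‖a L m - a K m‖ * t ^ (m:ℕ)
          ≤ (ε * t ^ n / (4 * n) / t ^ (m:ℕ)) * t ^ (m:ℕ) :=
            mul_le_mul_of_nonneg_right (hN' m L hLm K hKm) (by positivity)
        _ = ε * t ^ n / (4 * n) := div_mul_cancel₀ _ (pow_ne_zero _ ht0.ne')
    have hsumb : ‖∑ m ∈ Finset.range n, (a L m - a K m) * (w - c) ^ m‖ ≤ ε * t ^ n / 4 := by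
      rcases Nat.eq_zero_or_pos n with h0 | hn0
      · subst h0; simp; positivity
      calc ‖∑ m ∈ Finset.range n, (a L m - a K m) * (w - c) ^ m‖
          ≤ ∑ m ∈ Finset.range n, ‖(a L m - a K m) * (w - c) ^ m‖ := norm_sum_le _ _
        _ ≤ ∑ _m ∈ Finset.range n, ε * t ^ n / (4 * n) := by
            refine Finset.sum_le_sum fun m hm => ?_
            exact hterm ⟨m, Finset.mem_range.1 hm⟩
        _ = n * (ε * t ^ n / (4 * n)) := by rw [Finset.sum_const, Finset.card_range]; ring
        _ = ε * t ^ n / 4 := by field_simp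
    have htail1 : ‖f L w - f K w - ∑ m ∈ Finset.range (n + 1), (a L m - a K m) * (w - c) ^ m‖
        ≤ 4 * M * (t / R) ^ (n + 1) := htail L K (n + 1) w hwball
    have hkey : ‖(a L n - a K n) * (w - c) ^ n‖ ≤ ε * t ^ n / 4 + ε * t ^ n / 4 + ε / 2 * t ^ n := by
      have hsplit : (a L n - a K n) * (w - c) ^ n
          = (f L w - f K w - ∑ m ∈ Finset.range n, (a L m - a K m) * (w - c) ^ m)
            - (f L w - f K w - ∑ m ∈ Finset.range (n + 1), (a L m - a K m) * (w - c) ^ m) := by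
        rw [Finset.sum_range_succ]; ring
      rw [hsplit]
      have h1 : ‖f L w - f K w - ∑ m ∈ Finset.range n, (a L m - a K m) * (w - c) ^ m‖
          ≤ ε * t ^ n / 4 + ε * t ^ n / 4 :=
        (norm_sub_le _ _).trans (add_le_add hF hsumb)
      have h2 : 4 * M * (t / R) ^ (n + 1) ≤ ε / 2 * t ^ n := by
        have hRp : (0:ℝ) < (R:ℝ) ^ (n+1) := by positivity
        have h3 : t * (8 * (M + 1)) ≤ ε * (R:ℝ) ^ (n+1) :=
          (le_div_iff₀ (by positivity)).1 htε
        have h4 := mul_le_mul_of_nonneg_right h3 (pow_nonneg ht0.le n)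
        rw [div_pow, ← mul_div_assoc, div_le_iff₀ hRp]
        have hps2 : t ^ (n+1) = t ^ n * t := pow_succ t n
        nlinarith [pow_nonneg ht0.le n, ht0.le, hM]
      exact (norm_sub_le _ _).trans (by linarith [htail1, h1, h2])
    rw [norm_mul, norm_pow, ← htdef] at hkey
    have htn : (0:ℝ) < t ^ n := pow_pos ht0 n
    have : ‖a L n - a K n‖ * t ^ n ≤ ε * t ^ n := by linarith
    exact le_of_mul_le_mul_right (by linarith) htn
  -- conclude uniform Cauchy
  rw [Metric.uniformCauchySeqOn_iff]
  intro ε hε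
  have htend : Tendsto (fun n : ℕ => 4 * M * (1/2:ℝ) ^ n) atTop (𝓝 0) := by
    simpa using (tendsto_pow_atTop_nhds_zero_of_lt_one (by norm_num : (0:ℝ) ≤ 1/2)
      (by norm_num : (1/2:ℝ) < 1)).const_mul (4 * M)
  obtain ⟨n, hn⟩ := (htend.eventually (gt_mem_nhds (by linarith : (0:ℝ) < ε/2))).exists
  have hNm : ∀ m : Fin n, ∃ N, ∀ L ≥ N, ∀ K ≥ N,
      ‖a L m - a K m‖ ≤ ε / (2 * n) / ((R:ℝ)/2) ^ (m:ℕ) := by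
    rintro ⟨m, hm⟩
    have hn0 : 0 < n := lt_of_le_of_lt (Nat.zero_le m) hm
    exact hcau m _ (by positivity)
  choose N' hN' using hNm
  set N : ℕ := (Finset.univ : Finset (Fin n)).sup N' with hNdef
  refine ⟨N, fun L hL K hK z hz => ?_⟩
  have hzc : ‖z - c‖ ≤ (R:ℝ) / 2 := by
    rw [← dist_eq_norm]
    exact_mod_cast mem_closedBall.1 hz
  have hzb : z ∈ closedBall c ((R:ℝ)/2) := by
    rw [mem_closedBall, dist_eq_norm]; exact hzc
  rw [dist_eq_norm]
  have htail2 : ‖f L z - f K z - ∑ m ∈ Finset.range n, (a L m - a K m) * (z - c) ^ m‖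
      ≤ 4 * M * (1/2:ℝ) ^ n := by
    refine (htail L K n z hzb).trans ?_
    have h1 : ‖z - c‖ / R ≤ 1/2 := by
      rw [div_le_div_iff₀ hR (by norm_num)]; linarith
    have h2 : (‖z - c‖ / (R:ℝ)) ^ n ≤ (1/2:ℝ) ^ n := pow_le_pow_left₀ (by positivity) h1 n
    nlinarith
  have hsumb : ‖∑ m ∈ Finset.range n, (a L m - a K m) * (z - c) ^ m‖ ≤ ε / 2 := by
    rcases Nat.eq_zero_or_pos n with h0 | hn0
    · subst h0; simpa using (by positivity : (0:ℝ) ≤ ε / 2)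
    calc ‖∑ m ∈ Finset.range n, (a L m - a K m) * (z - c) ^ m‖
        ≤ ∑ m ∈ Finset.range n, ‖(a L m - a K m) * (z - c) ^ m‖ := norm_sum_le _ _
      _ ≤ ∑ _m ∈ Finset.range n, ε / (2 * n) := by
          refine Finset.sum_le_sum fun m hm => ?_
          have hmn := Finset.mem_range.1 hm
          have hLm : L ≥ N' ⟨m, hmn⟩ := le_trans (Finset.le_sup (Finset.mem_univ _)) hL
          have hKm : K ≥ N' ⟨m, hmn⟩ := le_trans (Finset.le_sup (Finset.mem_univ _)) hK
          rw [norm_mul, norm_pow]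
          calc ‖a L m - a K m‖ * ‖z - c‖ ^ m
              ≤ (ε / (2 * n) / ((R:ℝ)/2) ^ m) * ((R:ℝ)/2) ^ m := by
                refine mul_le_mul (hN' ⟨m, hmn⟩ L hLm K hKm)
                  (pow_le_pow_left₀ (norm_nonneg _) hzc m) (by positivity) (by positivity)
            _ = ε / (2 * n) := div_mul_cancel₀ _ (by positivity)
      _ = n * (ε / (2 * n)) := by rw [Finset.sum_const, Finset.card_range]; ring
      _ = ε / 2 := by field_simp
  calc ‖f L z - f K z‖
      ≤ ‖f L z - f K z - ∑ m ∈ Finset.range n, (a L m - a K m) * (z - c) ^ m‖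
        + ‖∑ m ∈ Finset.range n, (a L m - a K m) * (z - c) ^ m‖ := by
        simpa using norm_add_le (f L z - f K z - ∑ m ∈ Finset.range n, (a L m - a K m) * (z - c) ^ m)
          (∑ m ∈ Finset.range n, (a L m - a K m) * (z - c) ^ m)
    _ < ε := by
        have := htail2.trans_lt hn
        linarith

/-- Vitali–Porter theorem -/
theorem vitali_porter (D : Set ℂ) (hD : IsOpen D) (hconn : IsConnected D)
    (f : ℕ → ℂ → ℂ) (M : ℝ)
    (hholo : ∀ L, DifferentiableOn ℂ (f L) D)
    (hbound : ∀ L, ∀ z ∈ D, ‖f L z‖ ≤ M)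
    (D' : Set ℂ) (hD' : D' ⊆ D)
    (z₀ : ℂ) (hz₀D : z₀ ∈ D) (hacc : AccPt z₀ (𝓟 D'))
    (hconv : ∀ z ∈ D', ∃ w : ℂ, Tendsto (fun L => f L z) atTop (𝓝 w)) :
    ∃ finf : ℂ → ℂ, DifferentiableOn ℂ finf D ∧
      ∀ K : Set ℂ, IsCompact K → K ⊆ D →
        TendstoUniformlyOn f finf atTop K := by
  classical
  have hD'cau : ∀ z ∈ D', CauchySeq fun L => f L z := fun z hz =>
    (hconv z hz).choose_spec.cauchySeq
  -- pointwise Cauchy from uniform Cauchy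
  have ucs_pt : ∀ {s : Set ℂ}, UniformCauchySeqOn f atTop s → ∀ {w : ℂ}, w ∈ s →
      CauchySeq fun L => f L w := by
    intro s h w hw
    rw [Metric.cauchySeq_iff]
    intro ε hε
    obtain ⟨N, hN⟩ := Metric.uniformCauchySeqOn_iff.1 h ε hε
    exact ⟨N, fun m hm k hk => hN m hm k hk w hw⟩
  -- main local lemma: Cauchy points accumulating at c ∈ D give uniform Cauchy near any
  -- point z of D close to c
  have key : ∀ c ∈ D, (∀ δ : ℝ, 0 < δ → ∃ w, dist w c < δ ∧ w ≠ c ∧ CauchySeq fun L => f L w) →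
      ∃ ε > 0, UniformCauchySeqOn f atTop (ball c ε) := by
    intro c hc hacc'
    obtain ⟨R, hR0, hRD⟩ := (Metric.nhds_basis_closedBall.mem_iff).1 (hD.mem_nhds hc)
    lift R to NNReal using hR0.le
    have h := vp_key f M R c hR0 (fun L => (hholo L).mono hRD)
      (fun L z hz => hbound L z (hRD hz)) hacc'
    exact ⟨(R:ℝ)/2, by positivity, h.mono Metric.ball_subset_closedBall⟩
  set S : Set ℂ := {z | z ∈ D ∧ ∃ ε > 0, UniformCauchySeqOn f atTop (ball z ε)} with hSdef
  have hz₀S : z₀ ∈ S := by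
    refine ⟨hz₀D, key z₀ hz₀D ?_⟩
    intro δ hδ
    obtain ⟨w, ⟨hwU, hwD'⟩, hwne⟩ := (accPt_iff_nhds (x := z₀) (C := D')).1 hacc (ball z₀ δ)
      (ball_mem_nhds _ hδ)
    exact ⟨w, mem_ball.1 hwU, hwne, hD'cau w hwD'⟩
  have hSopen : IsOpen S := by
    rw [Metric.isOpen_iff]
    rintro z ⟨hzD, ε, hε, hcs⟩
    obtain ⟨ε₂, hε₂, hballD⟩ := Metric.isOpen_iff.1 hD z hzD
    refine ⟨min ε ε₂ / 2, by positivity, fun y hy => ?_⟩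
    have hyz : dist y z < min ε ε₂ / 2 := mem_ball.1 hy
    refine ⟨hballD (mem_ball.2 (lt_of_lt_of_le hyz (by
      have := min_le_right ε ε₂; linarith))), min ε ε₂ / 2, by positivity, ?_⟩
    refine hcs.mono fun w hw => ?_
    have hwy : dist w y < min ε ε₂ / 2 := mem_ball.1 hw
    have h1 : dist w z < ε := by
      have h2 := dist_triangle w y z
      have := min_le_left ε ε₂
      linarith
    exact mem_ball.2 h1
  have hclosure : ∀ z ∈ D, z ∈ closure S → z ∈ S := by
    intro z hzD hzc
    obtain ⟨r, hr0, hrD⟩ := (Metric.nhds_basis_closedBall.mem_iff).1 (hD.mem_nhds hzD)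
    obtain ⟨s, hsS, hsz⟩ : ∃ s ∈ S, dist s z < min (r/8) 1 := by
      obtain ⟨b, hb, hd⟩ := Metric.mem_closure_iff.1 hzc (min (r/8) 1) (by positivity)
      exact ⟨b, hb, by rwa [dist_comm]⟩
    obtain ⟨hsD, εs, hεs, hcss⟩ := hsS
    have hsz8 : dist s z < r / 8 := lt_of_lt_of_le hsz (min_le_left _ _)
    -- closedBall s (r/2) ⊆ D
    have hsub : closedBall s ((r:ℝ)/2) ⊆ D := by
      intro w hw
      apply hrD
      rw [mem_closedBall] at hw ⊢
      have := dist_triangle w s z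
      linarith
    set R : NNReal := ⟨r/2, by positivity⟩ with hRdef
    have hRe : (R:ℝ) = r/2 := rfl
    have hR0 : (0:ℝ) < R := by rw [hRe]; positivity
    have hkey := vp_key f M R s hR0 (fun L => (hholo L).mono (by rw [hRe]; exact hsub))
      (fun L w hw => hbound L w (hsub (by rwa [hRe] at hw))) ?_
    · refine ⟨hzD, r/8, by positivity, hkey.mono ?_⟩
      intro w hw
      rw [mem_ball] at hw
      rw [mem_closedBall, hRe]
      have := dist_triangle w z s
      rw [dist_comm s z] at hsz8
      linarith
    · intro δ hδ
      have hnrm : ‖(Complex.ofReal (min δ εs / 2))‖ = min δ εs / 2 := by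
        rw [Complex.norm_real]
        exact abs_of_nonneg (by positivity)
      refine ⟨s + Complex.ofReal (min δ εs / 2), ?_, ?_, ?_⟩
      · have : dist (s + Complex.ofReal (min δ εs / 2)) s = min δ εs / 2 := by
          rw [dist_eq_norm, add_sub_cancel_left, hnrm]
        rw [this]
        have := min_le_left δ εs
        linarith
      · intro hcontra
        have : Complex.ofReal (min δ εs / 2) = 0 := by
          have := congrArg (fun x => x - s) hcontra
          simpa [add_sub_cancel_left] using this
        have h0 : min δ εs / 2 = 0 := by exact_mod_cast this
        have := lt_min hδ hεs
        linarith
      · refine ucs_pt hcss ?_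
        rw [mem_ball, dist_eq_norm, add_sub_cancel_left, hnrm]
        have := min_le_right δ εs
        linarith
  have hDS : D ⊆ S := by
    intro z hz
    by_contra hzS
    have hzc : z ∉ closure S := fun h => hzS (hclosure z hz h)
    have hU : IsOpen (D \ closure S) := hD.sdiff isClosed_closure
    have hcover : D ⊆ S ∪ (D \ closure S) := by
      intro y hy
      by_cases h : y ∈ closure S
      · exact Or.inl (hclosure y hy h)
      · exact Or.inr ⟨hy, h⟩
    obtain ⟨x, hxD, hxS, hxU⟩ := hconn.isPreconnected S (D \ closure S) hSopen hU hcover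
      ⟨z₀, hz₀D, hz₀S⟩ ⟨z, hz, hz, hzc⟩
    exact hxU.2 (subset_closure hxS)
  -- pointwise limits
  set finf : ℂ → ℂ := fun z => limUnder atTop fun L => f L z with hfinf
  have htlu : TendstoLocallyUniformlyOn f finf atTop D := by
    intro u hu x hx
    obtain ⟨hxD, ε, hε, hcs⟩ := hDS hx
    have htU : TendstoUniformlyOn f finf atTop (ball x ε) := by
      refine hcs.tendstoUniformlyOn_of_tendsto fun w hw => ?_
      exact (ucs_pt hcs hw).tendsto_limUnder
    exact ⟨ball x ε, mem_nhdsWithin_of_mem_nhds (ball_mem_nhds x hε), htU u hu⟩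
  refine ⟨finf, htlu.differentiableOn (Eventually.of_forall hholo) hD, ?_⟩
  intro K hK hKD
  exact (tendstoLocallyUniformlyOn_iff_forall_isCompact hD).1 htlu K hKD hK
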